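/- Let q be a prime power and x, y ∈ F_{q^2}^n nonzero vectors with x* x = 0 and y* y = 0. Then there exists an n×n matrix P over F_{q^2} with P* P = I and P x = y. -/

import Mathlib

open Matrix Polynomial Finset

lemma card_pow_eq_mul_le {F : Type} [Field F] [Fintype F] [DecidableEq F] (m : ℕ) (hm : 2 ≤ m) (c : F) :
    #(univ.filter fun a : F => a ^ m = c * a) ≤ m := by
  classical
  set p : F[X] := X ^ m - C c * X with hp
  have hdeg : p.degree = m := by
    rw [hp]
    have h1 : (C c * X : F[X]).degree < (X ^ m : F[X]).degree := by
      rcases eq_or_ne c 0 with rfl | hc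
      · simp only [map_zero, zero_mul, degree_zero, degree_X_pow]
        exact WithBot.bot_lt_coe m
      · rw [degree_C_mul hc, degree_X, degree_X_pow]
        exact_mod_cast by omega
    rw [degree_sub_eq_left_of_degree_lt h1, degree_X_pow]
  have hp0 : p ≠ 0 := fun h => by
    rw [h, degree_zero] at hdeg
    exact (WithBot.bot_ne_coe) hdeg
  have hsub : (univ.filter fun a : F => a ^ m = c * a) ⊆ p.roots.toFinset := by
    intro a ha
    simp only [mem_filter, mem_univ, true_and] at ha
    rw [Multiset.mem_toFinset, mem_roots hp0]
    simp [hp, IsRoot, ha]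
  calc #(univ.filter fun a : F => a ^ m = c * a) ≤ #p.roots.toFinset := card_le_card hsub
    _ ≤ Multiset.card p.roots := Multiset.toFinset_card_le _
    _ ≤ p.natDegree := p.card_roots'
    _ = m := natDegree_eq_of_degree_eq_some hdeg

lemma trace_surj {F : Type} [Field F] [Fintype F] {q : ℕ} (hq : 2 ≤ q)
    (hF : Fintype.card F = q ^ 2)
    (hadd : ∀ a b : F, (a + b) ^ q = a ^ q + b ^ q)
    (a : F) (ha : a ^ q = a) : ∃ t : F, t ^ q + t = a := by
  classical
  set p : F[X] := X ^ q + X with hp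
  have hdeg : p.degree = q := by
    rw [hp]
    have h1 : (X : F[X]).degree < (X ^ q : F[X]).degree := by
      rw [degree_X, degree_X_pow]; exact_mod_cast by omega
    rw [degree_add_eq_left_of_degree_lt h1, degree_X_pow]
  have hnd : p.natDegree = q := natDegree_eq_of_degree_eq_some hdeg
  have hcard := FiniteField.card_image_polynomial_eval (p := p) (by rw [hdeg]; exact_mod_cast by omega)
  set I := univ.image fun x : F => eval x p with hI
  have hIK : I ⊆ univ.filter fun b : F => b ^ q = b := by
    intro b hb
    simp only [hI, mem_image, mem_univ, true_and] at hb
    obtain ⟨t, rfl⟩ := hb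
    simp only [mem_filter, mem_univ, true_and, hp, eval_add, eval_pow, eval_X]
    have h2 : t ^ (q * q) = t := by
      have := FiniteField.pow_card t
      rwa [hF, pow_two] at this
    rw [hadd, ← pow_mul, h2, add_comm]
  have hKle : #(univ.filter fun b : F => b ^ q = b) ≤ q := by
    have := card_pow_eq_mul_le (F := F) q hq 1
    simpa using this
  have hIge : q ≤ #I := by
    rw [hF, hnd] at hcard
    by_contra hlt
    push_neg at hlt
    have : q ^ 2 ≤ q * (q - 1) := le_trans hcard (Nat.mul_le_mul_left _ (by omega))
    nlinarith [Nat.sub_le q 1, hq]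
  have hIeq : I = univ.filter fun b : F => b ^ q = b :=
    Finset.eq_of_subset_of_card_le hIK (le_trans hKle hIge)
  have haI : a ∈ I := by rw [hIeq]; simp [ha]
  simp only [hI, mem_image, mem_univ, true_and, hp, eval_add, eval_pow, eval_X] at haI
  exact haI

lemma norm_surj {F : Type} [Field F] [Fintype F] {q : ℕ} (hq : 2 ≤ q)
    (hF : Fintype.card F = q ^ 2)
    (a : F) (ha : a ^ q = a) : ∃ t : F, t ^ (q + 1) = a := by
  classical
  set p : F[X] := X ^ (q + 1) with hp
  have hdeg : p.degree = (q + 1 : ℕ) := by rw [hp, degree_X_pow]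
  have hnd : p.natDegree = q + 1 := natDegree_eq_of_degree_eq_some hdeg
  have hcard := FiniteField.card_image_polynomial_eval (p := p) (by rw [hdeg]; exact_mod_cast by omega)
  set I := univ.image fun x : F => eval x p with hI
  have hIK : I ⊆ univ.filter fun b : F => b ^ q = b := by
    intro b hb
    simp only [hI, mem_image, mem_univ, true_and] at hb
    obtain ⟨t, rfl⟩ := hb
    simp only [mem_filter, mem_univ, true_and, hp, eval_pow, eval_X]
    have h2 : t ^ (q * q) = t := by
      have := FiniteField.pow_card t
      rwa [hF, pow_two] at this
    calc (t ^ (q+1)) ^ q = t ^ (q * q) * t ^ q := by ring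
      _ = t ^ (q + 1) := by rw [h2]; ring
  have hKle : #(univ.filter fun b : F => b ^ q = b) ≤ q := by
    have := card_pow_eq_mul_le (F := F) q hq 1
    simpa using this
  have hIge : q ≤ #I := by
    rw [hF, hnd] at hcard
    by_contra hlt
    push_neg at hlt
    have : q ^ 2 ≤ (q + 1) * (q - 1) := le_trans hcard (Nat.mul_le_mul_left _ (by omega))
    obtain ⟨r, rfl⟩ : ∃ r, q = r + 2 := ⟨q - 2, by omega⟩
    have h3 : r + 2 - 1 = r + 1 := rfl
    rw [h3] at this
    nlinarith
  have hIeq : I = univ.filter fun b : F => b ^ q = b :=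
    Finset.eq_of_subset_of_card_le hIK (le_trans hKle hIge)
  have haI : a ∈ I := by rw [hIeq]; simp [ha]
  simp only [hI, mem_image, mem_univ, true_and, hp, eval_pow, eval_X] at haI
  exact haI

lemma sep_exists {F : Type} [Field F] [Fintype F] {q : ℕ} (hq : 2 ≤ q)
    (hF : Fintype.card F = q ^ 2) : ∃ c : F, c ^ q ≠ c := by
  classical
  by_contra hall
  push_neg at hall
  have h1 : (univ.filter fun a : F => a ^ q = (1:F) * a) = univ := by
    apply Finset.eq_univ_of_forall
    intro a; simp [hall a]
  have := card_pow_eq_mul_le (F := F) q hq 1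
  rw [h1, Finset.card_univ, hF] at this
  nlinarith

lemma frob_add {F : Type} [Field F] [Fintype F] {q : ℕ} (hq : IsPrimePow q)
    (hF : Fintype.card F = q ^ 2) : ∀ a b : F, (a + b) ^ q = a ^ q + b ^ q := by
  obtain ⟨p, k, pp, hk, rfl⟩ := hq
  haveI : CharP F (ringChar F) := ringChar.charP F
  obtain ⟨m, hrp, hcard⟩ := FiniteField.card F (ringChar F)
  have hpp : p.Prime := pp.nat_prime
  have heq : ringChar F ^ (m : ℕ) = p ^ (k * 2) := by
    rw [← hcard, hF, ← pow_mul]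
  have hr : ringChar F = p := by
    have hdvd : ringChar F ∣ p ^ (k * 2) := heq ▸ dvd_pow_self _ m.ne_zero
    exact (Nat.prime_dvd_prime_iff_eq hrp hpp).mp (hrp.dvd_of_dvd_pow hdvd)
  haveI : CharP F p := hr ▸ ringChar.charP F
  haveI : Fact p.Prime := ⟨hpp⟩
  haveI : ExpChar F p := ExpChar.prime hpp
  intro a b
  exact add_pow_char_pow ..

/-- The hermitian dot product. -/
def hdot (q : ℕ) {n : ℕ} {F : Type} [Field F] (u v : Fin n → F) : F :=
  (fun i => (u i) ^ q) ⬝ᵥ v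

section Sesq

variable {F : Type} [Field F] {q n : ℕ}

/-- `hdot q u` as a linear map in the second argument. -/
def hLin (q : ℕ) {n : ℕ} {F : Type} [Field F] (u : Fin n → F) : (Fin n → F) →ₗ[F] F where
  toFun v := hdot q u v
  map_add' a b := by simp [hdot, dotProduct, mul_add, Finset.sum_add_distrib]
  map_smul' c v := by
    simp [hdot, dotProduct, Finset.mul_sum]
    exact Finset.sum_congr rfl fun i _ => by ring

@[simp] lemma hLin_apply (u v : Fin n → F) : hLin q u v = hdot q u v := rfl

lemma hdot_smul_left (σ : F →+* F) (hσ : ∀ a : F, σ a = a ^ q) (c : F) (u v : Fin n → F) :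
    hdot q (c • u) v = σ c * hdot q u v := by
  simp [hdot, dotProduct, hσ, Finset.mul_sum, mul_pow]
  exact Finset.sum_congr rfl fun i _ => by ring

lemma hdot_add_left (σ : F →+* F) (hσ : ∀ a : F, σ a = a ^ q) (u w v : Fin n → F) :
    hdot q (u + w) v = hdot q u v + hdot q w v := by
  simp only [hdot, dotProduct, Pi.add_apply]
  rw [← Finset.sum_add_distrib]
  refine Finset.sum_congr rfl fun i _ => ?_
  rw [← hσ, ← hσ, ← hσ, map_add, add_mul]

lemma hdot_conj (σ : F →+* F) (hσ : ∀ a : F, σ a = a ^ q)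
    (hinv : ∀ a : F, σ (σ a) = a) (u v : Fin n → F) :
    σ (hdot q u v) = hdot q v u := by
  simp only [hdot, dotProduct, map_sum, _root_.map_mul]
  refine Finset.sum_congr rfl fun i _ => ?_
  rw [← hσ (u i), hinv (u i), hσ (v i), mul_comm]

lemma hdot_single (u : Fin n → F) (j : Fin n) (hq0 : q ≠ 0) :
    hdot q (Pi.single j 1) u = u j := by
  simp only [hdot, dotProduct]
  rw [Finset.sum_eq_single j]
  · simp
  · intro b _ hb
    simp [Pi.single_apply, if_neg hb, zero_pow hq0]
  · simp

lemma hdot_add_right (u v w : Fin n → F) :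
    hdot q u (v + w) = hdot q u v + hdot q u w := by
  rw [← hLin_apply, map_add]; rfl

lemma hdot_smul_right (c : F) (u v : Fin n → F) :
    hdot q u (c • v) = c * hdot q u v := by
  rw [← hLin_apply, _root_.map_smul]; rfl

lemma hdot_sub_right (u v w : Fin n → F) :
    hdot q u (v - w) = hdot q u v - hdot q u w := by
  rw [← hLin_apply, map_sub]; rfl

lemma hdot_sub_left (σ : F →+* F) (hσ : ∀ a : F, σ a = a ^ q) (u w v : Fin n → F) :
    hdot q (u - w) v = hdot q u v - hdot q w v := by
  simp only [hdot, dotProduct, Pi.sub_apply]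
  rw [← Finset.sum_sub_distrib]
  refine Finset.sum_congr rfl fun i _ => ?_
  rw [← hσ, ← hσ, ← hσ, map_sub, sub_mul]

lemma hdot_single_right (hq0 : q ≠ 0) (u : Fin n → F) (j : Fin n) :
    hdot q u (Pi.single j 1) = (u j) ^ q := by
  simp only [hdot, dotProduct]
  rw [Finset.sum_eq_single j]
  · simp
  · intro b _ hb
    simp [Pi.single_apply, if_neg hb]
  · simp

end Sesq

/-- The index swap for the hyperbolic Gram matrix. -/
def tτ {k : ℕ} : Fin 2 ⊕ Fin k → Fin 2 ⊕ Fin k :=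
  Sum.elim (fun a => Sum.inl (if a = 0 then 1 else 0)) Sum.inr

lemma tτ_invol {k : ℕ} (z : Fin 2 ⊕ Fin k) : tτ (tτ z) = z := by
  rcases z with a | a
  · fin_cases a <;> simp [tτ]
  · simp [tτ]


open Module in
lemma ortho_family {F : Type} [Field F] {q : ℕ} (hq0 : q ≠ 0)
    (σ : F →+* F) (hσ : ∀ a : F, σ a = a ^ q) (hinv : ∀ a : F, σ (σ a) = a)
    (hnorm : ∀ a : F, a ≠ 0 → a ^ q = a → ∃ c : F, c ^ (q + 1) = a)
    (hsep : ∃ c : F, c ^ q ≠ c) {n : ℕ} :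
    ∀ (m : ℕ) (W : Submodule F (Fin n → F)),
      (∀ w ∈ W, (∀ u ∈ W, hdot q u w = 0) → w = 0) → finrank F W = m →
      ∃ c : Fin m → (Fin n → F), (∀ i, c i ∈ W) ∧
        ∀ i j, hdot q (c i) (c j) = if i = j then 1 else 0 := by
  intro m
  induction m with
  | zero => exact fun W _ _ => ⟨Fin.elim0, fun i => i.elim0, fun i => i.elim0⟩
  | succ m ih =>
    intro W hnd hrank
    -- there is an anisotropic vector in W
    have hexists : ∃ u ∈ W, hdot q u u ≠ 0 := by
      by_contra hno
      push_neg at hno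
      have hzero : ∀ u ∈ W, ∀ w ∈ W, hdot q u w = 0 := by
        intro u hu w hw
        obtain ⟨c, hc⟩ := hsep
        set t := hdot q u w with ht
        have h1 : t + σ t = 0 := by
          have h := hno (u + w) (add_mem hu hw)
          simp only [hdot_add_left σ hσ, hdot_add_right] at h
          rw [hno u hu, hno w hw, ← hdot_conj σ hσ hinv u w] at h
          linear_combination h
        have h2 : σ c * t + c * σ t = 0 := by
          have h := hno (c • u + w) (add_mem (Submodule.smul_mem _ _ hu) hw)
          simp only [hdot_add_left σ hσ, hdot_add_right, hdot_smul_left σ hσ,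
            hdot_smul_right] at h
          rw [hno u hu, hno w hw, ← hdot_conj σ hσ hinv u w] at h
          linear_combination h
        have hst : σ t = -t := by linear_combination h1
        rw [hst] at h2
        have h3 : (σ c - c) * t = 0 := by linear_combination h2
        have h4 : σ c - c ≠ 0 := by
          rw [hσ]; intro h; exact hc (by linear_combination h)
        exact (mul_eq_zero.mp h3).resolve_left h4
      have hbot : W = ⊥ := by
        rw [Submodule.eq_bot_iff]
        exact fun w hw => hnd w hw (fun u hu => hzero u hu w hw)
      rw [hbot, finrank_bot] at hrank
      omega
    obtain ⟨u, huW, huu⟩ := hexists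
    -- normalize u
    have hfix : (hdot q u u)⁻¹ ^ q = (hdot q u u)⁻¹ := by
      rw [← hσ, map_inv₀, hdot_conj σ hσ hinv]
    obtain ⟨c, hc⟩ := hnorm _ (inv_ne_zero huu) hfix
    set u' := c • u with hu'
    have hu'W : u' ∈ W := Submodule.smul_mem _ _ huW
    have hu'u' : hdot q u' u' = 1 := by
      rw [hu', hdot_smul_left σ hσ, hdot_smul_right, hσ]
      rw [show c ^ q * (c * hdot q u u) = c ^ (q + 1) * hdot q u u by ring, hc]
      exact inv_mul_cancel₀ huu
    -- the orthogonal complement of u' inside W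
    set f : W →ₗ[F] F := (hLin q u').domRestrict W with hf
    set W' : Submodule F (Fin n → F) := Submodule.map W.subtype (LinearMap.ker f) with hW'
    have hmem : ∀ w : Fin n → F, w ∈ W' ↔ w ∈ W ∧ hdot q u' w = 0 := by
      intro w
      constructor
      · rintro ⟨⟨y, hy⟩, hky, rfl⟩
        exact ⟨hy, hky⟩
      · rintro ⟨hwW, hw0⟩
        exact ⟨⟨w, hwW⟩, hw0, rfl⟩
    have hnd' : ∀ w ∈ W', (∀ v ∈ W', hdot q v w = 0) → w = 0 := by
      intro w hw hvw
      obtain ⟨hwW, hw0⟩ := (hmem w).mp hw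
      refine hnd w hwW fun v hv => ?_
      -- decompose v = (hdot u' v) • u' + r with r ∈ W'
      set r := v - (hdot q u' v) • u' with hr
      have hrW' : r ∈ W' := by
        rw [hmem]
        refine ⟨Submodule.sub_mem _ hv (Submodule.smul_mem _ _ hu'W), ?_⟩
        rw [hr, ← hLin_apply, map_sub, _root_.map_smul, hLin_apply, hLin_apply,
          smul_eq_mul, hu'u', mul_one, sub_self]
      have hvdec : v = (hdot q u' v) • u' + r := by rw [hr]; abel
      rw [hvdec, hdot_add_left σ hσ, hdot_smul_left σ hσ, hw0, mul_zero,
        hvw r hrW', add_zero]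
    have hrank' : finrank F W' = m := by
      have h1 : finrank F W' = finrank F (LinearMap.ker f) :=
        Submodule.finrank_map_subtype_eq W _
      have h2 : LinearMap.range f = ⊤ := by
        rw [eq_top_iff]
        intro a _
        have : a • f ⟨u', hu'W⟩ ∈ LinearMap.range f :=
          Submodule.smul_mem _ _ (LinearMap.mem_range_self f _)
        simpa [hf, hu'u'] using this
      have h3 := LinearMap.finrank_range_add_finrank_ker f
      rw [h2, finrank_top, Module.finrank_self, hrank] at h3
      omega
    obtain ⟨cf, hcfW, hcf⟩ := ih W' hnd' hrank'
    refine ⟨Fin.cons u' cf, ?_, ?_⟩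
    · intro i
      refine Fin.cases ?_ (fun j => ?_) i
      · exact hu'W
      · exact ((hmem _).mp (hcfW j)).1
    · intro i j
      refine Fin.cases ?_ (fun a => ?_) i <;> refine Fin.cases ?_ (fun b => ?_) j
      · simpa using hu'u'
      · have := ((hmem _).mp (hcfW b)).2
        simpa [Fin.succ_ne_zero b, (Fin.succ_ne_zero b).symm] using this
      · have := ((hmem _).mp (hcfW a)).2
        have h0 : hdot q (cf a) u' = 0 := by
          rw [← hdot_conj σ hσ hinv u' (cf a), this, map_zero]
        simpa [Fin.succ_ne_zero a] using h0
      · have := hcf a b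
        simpa [Fin.succ_inj] using this

open Module in
lemma hyperbolic_family {F : Type} [Field F] {q : ℕ} (hq0 : q ≠ 0)
    (σ : F →+* F) (hσ : ∀ a : F, σ a = a ^ q) (hinv : ∀ a : F, σ (σ a) = a)
    (hnorm : ∀ a : F, a ≠ 0 → a ^ q = a → ∃ c : F, c ^ (q + 1) = a)
    (hsep : ∃ c : F, c ^ q ≠ c)
    (htr : ∀ a : F, a ^ q = a → ∃ t : F, t ^ q + t = a)
    {n : ℕ} (x : Fin n → F) (hx0 : x ≠ 0) (hxx : hdot q x x = 0) :
    ∃ d : Fin 2 ⊕ Fin (n - 2) → (Fin n → F),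
      d (Sum.inl 0) = x ∧ LinearIndependent F d ∧
      ∀ i j, hdot q (d i) (d j) = if j = tτ i then 1 else 0 := by
  classical
  -- find a vector non-orthogonal to x, normalize
  obtain ⟨i₀, hi₀⟩ := Function.ne_iff.mp hx0
  have hxi₀ : x i₀ ≠ 0 := by simpa using hi₀
  set v₁ : Fin n → F := ((x i₀) ^ q)⁻¹ • (Pi.single i₀ 1 : Fin n → F) with hv₁
  have hxv₁ : hdot q x v₁ = 1 := by
    rw [hv₁, hdot_smul_right, hdot_single_right hq0]
    exact inv_mul_cancel₀ (pow_ne_zero _ hxi₀)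
  have hv₁x : hdot q v₁ x = 1 := by
    rw [← hdot_conj σ hσ hinv, hxv₁, _root_.map_one]
  -- make it isotropic
  have hafix : (hdot q v₁ v₁) ^ q = hdot q v₁ v₁ := by
    rw [← hσ, hdot_conj σ hσ hinv]
  obtain ⟨t, ht⟩ := htr _ hafix
  clear_value v₁
  set v : Fin n → F := v₁ - t • x with hv
  have hxv : hdot q x v = 1 := by
    rw [hv, hdot_sub_right, hdot_smul_right, hxx, mul_zero, sub_zero, hxv₁]
  have hvx : hdot q v x = 1 := by
    rw [← hdot_conj σ hσ hinv, hxv, _root_.map_one]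
  have hvv : hdot q v v = 0 := by
    rw [hv]
    simp only [hdot_sub_left σ hσ, hdot_sub_right, hdot_smul_left σ hσ,
      hdot_smul_right, hσ, hxv₁, hxx, hv₁x]
    linear_combination -ht
  clear_value v
  -- the orthogonal complement of x and v
  set φ : (Fin n → F) →ₗ[F] F × F := LinearMap.prod (hLin q x) (hLin q v) with hφ
  set W : Submodule F (Fin n → F) := LinearMap.ker φ with hW
  have hmemW : ∀ w, w ∈ W ↔ hdot q x w = 0 ∧ hdot q v w = 0 := by
    intro w
    rw [hW, LinearMap.mem_ker, hφ, LinearMap.prod_apply, Prod.mk_eq_zero]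
    rfl
  have hrange : LinearMap.range φ = ⊤ := by
    rw [eq_top_iff]
    rintro ⟨a, b⟩ -
    refine ⟨a • v + b • x, ?_⟩
    rw [hφ, LinearMap.prod_apply]
    simp only [Function.prod, hLin_apply, hdot_add_right, hdot_smul_right]
    rw [hxv, hxx, hvv, hvx]
    simp
  have hrankW : finrank F W = n - 2 := by
    have h3 := LinearMap.finrank_range_add_finrank_ker φ
    rw [hrange, finrank_top, Module.finrank_prod, Module.finrank_self,
      Module.finrank_pi] at h3
    simp only [Fintype.card_fin] at h3
    rw [hW]
    omega
  have hndW : ∀ w ∈ W, (∀ u ∈ W, hdot q u w = 0) → w = 0 := by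
    intro w hw hall
    obtain ⟨hxw, hvw⟩ := (hmemW w).mp hw
    have hcoord : ∀ u : Fin n → F, hdot q u w = 0 := by
      intro u
      set r : Fin n → F := u - (hdot q v u) • x - (hdot q x u) • v with hr
      have hrW : r ∈ W := by
        rw [hmemW]
        constructor
        · rw [hr, hdot_sub_right, hdot_sub_right, hdot_smul_right, hdot_smul_right,
            hxx, hxv]
          ring
        · rw [hr, hdot_sub_right, hdot_sub_right, hdot_smul_right, hdot_smul_right,
            hvx, hvv]
          ring
      have hdec : u = r + (hdot q v u) • x + (hdot q x u) • v := by rw [hr]; abel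
      rw [hdec, hdot_add_left σ hσ, hdot_add_left σ hσ, hdot_smul_left σ hσ,
        hdot_smul_left σ hσ, hxw, hvw, hall r hrW]
      ring
    funext j
    have := hcoord (Pi.single j 1)
    rwa [hdot_single _ j hq0] at this
  obtain ⟨cf, hcfW, hcf⟩ := ortho_family hq0 σ hσ hinv hnorm hsep (n - 2) W hndW hrankW
  have hgram : ∀ i j, hdot q (Sum.elim ![x, v] cf i) (Sum.elim ![x, v] cf j)
      = if j = tτ i then 1 else 0 := by
    have hxc : ∀ b, hdot q x (cf b) = 0 := fun b => ((hmemW _).mp (hcfW b)).1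
    have hvc : ∀ b, hdot q v (cf b) = 0 := fun b => ((hmemW _).mp (hcfW b)).2
    have hcx : ∀ b, hdot q (cf b) x = 0 := fun b => by
      rw [← hdot_conj σ hσ hinv, hxc, map_zero]
    have hcv : ∀ b, hdot q (cf b) v = 0 := fun b => by
      rw [← hdot_conj σ hσ hinv, hvc, map_zero]
    rintro (a | a) (b | b)
    · fin_cases a <;> fin_cases b <;>
        simp [tτ, hxx, hxv, hvx, hvv]
    · fin_cases a <;> simp [tτ, hxc, hvc]
    · fin_cases b <;> simp [tτ, hcx, hcv]
    · simp only [Sum.elim_inr]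
      rw [hcf a b]
      simp only [tτ, Sum.elim_inr, Sum.inr.injEq]
      by_cases h : a = b
      · simp [h]
      · simp [h, Ne.symm h]
  refine ⟨Sum.elim ![x, v] cf, by simp, ?_, hgram⟩
  · -- linear independence
    rw [Fintype.linearIndependent_iff]
    intro g hg
    have key : ∀ j, g (tτ j) = 0 := by
      intro j
      have h := congrArg (hLin q (Sum.elim ![x, v] cf j)) hg
      rw [map_sum, map_zero] at h
      have h2 : ∀ i ∈ Finset.univ, (hLin q (Sum.elim ![x, v] cf j)) (g i • Sum.elim ![x, v] cf i)
          = if i = tτ j then g i else 0 := by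
        intro i _
        rw [_root_.map_smul, smul_eq_mul, hLin_apply, hgram]
        split <;> simp
      rw [Finset.sum_congr rfl h2, Finset.sum_ite_eq' Finset.univ (tτ j) g] at h
      simpa using h
    intro i
    have := key (tτ i)
    rwa [tτ_invol] at this

open Module in
lemma matrix_of_family {F : Type} [Field F] {q n k : ℕ} (e : (Fin 2 ⊕ Fin k) ≃ Fin n)
    (d : Fin 2 ⊕ Fin k → (Fin n → F)) (hli : LinearIndependent F d) :
    ∃ A : Matrix (Fin n) (Fin n) F, IsUnit A.det ∧
      ((A.map (· ^ q))ᵀ * A = Matrix.of fun i j => hdot q (d (e.symm i)) (d (e.symm j))) ∧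
      ∀ j0 : Fin n, A *ᵥ Pi.single j0 (1 : F) = d (e.symm j0) := by
  classical
  haveI : Nonempty (Fin n) := ⟨e (Sum.inl 0)⟩
  have hcard : Fintype.card (Fin n) = finrank F (Fin n → F) := by
    rw [Fintype.card_fin, Module.finrank_pi, Fintype.card_fin]
  have hli' : LinearIndependent F (d ∘ ⇑e.symm) := hli.comp _ e.symm.injective
  set b : Basis (Fin n) F (Fin n → F) := basisOfLinearIndependentOfCardEqFinrank hli' hcard
    with hb
  have hbeq : ⇑b = d ∘ ⇑e.symm := coe_basisOfLinearIndependentOfCardEqFinrank hli' hcard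
  set A : Matrix (Fin n) (Fin n) F := Matrix.of fun i j => d (e.symm j) i with hA
  have hAb : A = (Pi.basisFun F (Fin n)).toMatrix ⇑b := by
    ext i j
    rw [Basis.toMatrix_apply, Pi.basisFun_repr, hbeq]
    rfl
  refine ⟨A, ?_, ?_, ?_⟩
  · rw [hAb]
    have := (Pi.basisFun F (Fin n)).invertibleToMatrix b
    exact Matrix.isUnit_det_of_invertible _
  · ext i j
    rw [Matrix.mul_apply]
    simp only [Matrix.transpose_apply, Matrix.map_apply, hA, Matrix.of_apply]
    rfl
  · intro j0
    funext i
    simp only [Matrix.mulVec, dotProduct, hA, Matrix.of_apply, Pi.single_apply,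
      mul_ite, mul_one, mul_zero]
    rw [Finset.sum_ite_eq' Finset.univ j0 (fun j => d (e.symm j) i)]
    simp

/-- Any two nonzero isotropic vectors over the field with `q^2` elements are
related by a unitary matrix. -/
theorem unitary_transitive_on_isotropic
    (q : ℕ) (hq : IsPrimePow q)
    (F : Type) [Field F] [Fintype F]
    (hF : Fintype.card F = q ^ 2) (n : ℕ)
    (x y : Fin n → F) (hx0 : x ≠ 0) (hy0 : y ≠ 0)
    (hx : (fun i => (x i) ^ q) ⬝ᵥ x = 0)
    (hy : (fun i => (y i) ^ q) ⬝ᵥ y = 0) :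
    ∃ P : Matrix (Fin n) (Fin n) F,
      (P.map (· ^ q))ᵀ * P = 1 ∧ P *ᵥ x = y := by
  classical
  have hq2 : 2 ≤ q := hq.two_le
  have hq0 : q ≠ 0 := by omega
  -- the Frobenius-type ring endomorphism
  have hadd := frob_add hq hF
  set σ : F →+* F :=
    { toFun := fun a => a ^ q
      map_one' := one_pow q
      map_mul' := fun a b => mul_pow a b q
      map_zero' := zero_pow hq0
      map_add' := hadd } with hσdef
  have hσ : ∀ a : F, σ a = a ^ q := fun a => rfl
  have hinv : ∀ a : F, σ (σ a) = a := by
    intro a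
    rw [hσ, hσ, ← pow_mul, ← pow_two]
    have := FiniteField.pow_card a
    rwa [hF] at this
  have hnorm : ∀ a : F, a ≠ 0 → a ^ q = a → ∃ c : F, c ^ (q + 1) = a :=
    fun a _ h => norm_surj hq2 hF a h
  have hsep := sep_exists hq2 hF
  have htr : ∀ a : F, a ^ q = a → ∃ t : F, t ^ q + t = a :=
    fun a h => trace_surj hq2 hF hadd a h
  -- n ≥ 2
  have hn : 2 ≤ n := by
    by_contra h
    push_neg at h
    interval_cases n
    · exact hx0 (funext fun i => i.elim0)
    · have h1 : (x 0) ^ q * x 0 = 0 := by simpa [dotProduct, Fin.sum_univ_one] using hx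
      have h2 : x 0 = 0 := by
        rcases mul_eq_zero.mp h1 with h2 | h2
        · exact pow_eq_zero_iff hq0 |>.mp h2
        · exact h2
      exact hx0 (funext fun i => by rw [Subsingleton.elim i 0]; simpa using h2)
  -- hyperbolic families
  obtain ⟨dx, hdx0, hdxli, hdxgram⟩ :=
    hyperbolic_family hq0 σ hσ hinv hnorm hsep htr x hx0 hx
  obtain ⟨dy, hdy0, hdyli, hdygram⟩ :=
    hyperbolic_family hq0 σ hσ hinv hnorm hsep htr y hy0 hy
  set e : (Fin 2 ⊕ Fin (n - 2)) ≃ Fin n :=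
    finSumFinEquiv.trans (finCongr (by omega)) with he
  obtain ⟨A, hAdet, hAgram, hAcol⟩ := matrix_of_family (q := q) e dx hdxli
  obtain ⟨B, hBdet, hBgram, hBcol⟩ := matrix_of_family (q := q) e dy hdyli
  -- the two Gram matrices agree
  have hGram : (A.map (· ^ q))ᵀ * A = (B.map (· ^ q))ᵀ * B := by
    rw [hAgram, hBgram]
    ext i j
    simp only [Matrix.of_apply]
    rw [hdxgram, hdygram]
  refine ⟨B * A⁻¹, ?_, ?_⟩
  · -- unitarity
    have h1 : A * A⁻¹ = 1 := Matrix.mul_nonsing_inv A hAdet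
    have hmap : ∀ M : Matrix (Fin n) (Fin n) F, M.map (· ^ q) = M.map ⇑σ := by
      intro M; ext i j; simp [Matrix.map_apply, hσ]
    have h2 : ((A⁻¹).map (· ^ q))ᵀ * (A.map (· ^ q))ᵀ = 1 := by
      rw [hmap, hmap, ← Matrix.transpose_mul, ← Matrix.map_mul, h1,
        Matrix.map_one _ σ.map_zero σ.map_one, Matrix.transpose_one]
    calc ((B * A⁻¹).map (· ^ q))ᵀ * (B * A⁻¹)
        = ((A⁻¹).map (· ^ q))ᵀ * ((B.map (· ^ q))ᵀ * B) * A⁻¹ := by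
          rw [hmap (B * A⁻¹), Matrix.map_mul, Matrix.transpose_mul, ← hmap A⁻¹, ← hmap B]
          noncomm_ring
      _ = ((A⁻¹).map (· ^ q))ᵀ * (A.map (· ^ q))ᵀ * (A * A⁻¹) := by
          rw [← hGram]; noncomm_ring
      _ = 1 := by rw [h1, h2, one_mul]
  · -- mapping x to y
    have hx' : x = A *ᵥ Pi.single (e (Sum.inl 0)) 1 := by
      rw [hAcol, Equiv.symm_apply_apply, hdx0]
    have hPA : (B * A⁻¹) * A = B := by
      rw [Matrix.mul_assoc, Matrix.nonsing_inv_mul A hAdet, Matrix.mul_one]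
    rw [hx', Matrix.mulVec_mulVec, hPA, hBcol, Equiv.symm_apply_apply, hdy0]
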